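/- arXiv:2205.05044 — 2 statements merged into one kernel-verified Lean document; each statement's English description precedes it below -/
import Mathlib

section
/- Let G be a k-edge-connected graph with k ≥ 2m, and let S be a nonempty subset of V(G). Then Ω_m(G \ S) ≤ Σ_{v∈S} m(d_G(v) - 2m)/k + (2m/k)·Ω_m(G[S]). -/
open SimpleGraph

def IsTreeConn {V : Type*} (m : ℕ) (G : SimpleGraph V) : Prop :=
  ∃ T : Fin m → SimpleGraph V, (∀ i, T i ≤ G) ∧ (∀ i, (T i).IsTree) ∧
    ∀ i j, i ≠ j → Disjoint (T i).edgeSet (T j).edgeSet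

noncomputable def eIn {V : Type*} (G : SimpleGraph V) (S : Set V) : ℕ :=
  {e ∈ G.edgeSet | ∀ v ∈ e, v ∈ S}.ncard

def IsSparse {V : Type*} (m : ℕ) (G : SimpleGraph V) : Prop :=
  ∀ S : Set V, S.Nonempty → (eIn G S : ℤ) ≤ m * S.ncard - m

def mComp {V : Type*} (m : ℕ) (G : SimpleGraph V) (v : V) : Set V :=
  ⋃₀ {X : Set V | v ∈ X ∧ IsTreeConn m (G.induce X)}

noncomputable def crossE {V : Type*} (m : ℕ) (G : SimpleGraph V) : ℕ :=
  {e ∈ G.edgeSet | ∃ u ∈ e, ∃ w ∈ e, mComp m G u ≠ mComp m G w}.ncard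

noncomputable def Omega {V : Type*} (m : ℕ) (G : SimpleGraph V) : ℤ :=
  m * (Set.range (mComp m G)).ncard - crossE m G

noncomputable def cutE {V : Type*} (G : SimpleGraph V) (S : Set V) : ℕ :=
  {e ∈ G.edgeSet | ∃ u ∈ e, ∃ w ∈ e, u ∈ S ∧ w ∉ S}.ncard

def EdgeConn {V : Type*} (k : ℕ) (G : SimpleGraph V) : Prop :=
  ∀ S : Set V, S.Nonempty → Sᶜ.Nonempty → k ≤ cutE G S

lemma exists_tree_le {V : Type*} [Fintype V] (G : SimpleGraph V) (hG : G.Connected) :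
    ∃ T ≤ G, T.IsTree := by
  classical
  generalize hn : G.edgeSet.ncard = n
  induction n using Nat.strong_induction_on generalizing G with
  | _ n ih =>
    by_cases hac : G.IsAcyclic
    · exact ⟨G, le_rfl, ⟨hG, hac⟩⟩
    · simp only [IsAcyclic, not_forall, not_not] at hac
      obtain ⟨v, c, hc⟩ := hac
      cases c with
      | nil => exact absurd rfl hc.ne_nil
      | @cons _ b _ hadj p =>
        have hmem : s(v, b) ∈ (Walk.cons hadj p).edges := by simp
        have hnb : ¬ G.IsBridge s(v, b) := by
          rw [isBridge_iff_forall_cycle_notMem hadj]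
          push_neg
          exact ⟨v, _, hc, hmem⟩
        rw [isBridge_iff] at hnb
        have hreach : (G \ fromEdgeSet {s(v, b)}).Reachable v b := by
          by_contra h
          exact hnb h
        set G' := G \ fromEdgeSet {s(v, b)} with hG'
        have hle : G' ≤ G := sdiff_le
        have hadj' : ∀ x y : V, G.Adj x y → G'.Reachable x y := by
          intro x y hxy
          by_cases he : s(x, y) = s(v, b)
          · rw [Sym2.eq_iff] at he
            rcases he with ⟨rfl, rfl⟩ | ⟨rfl, rfl⟩
            · exact hreach
            · exact hreach.symm
          · exact Adj.reachable (by
              simp only [hG', sdiff_adj, fromEdgeSet_adj, Set.mem_singleton_iff]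
              exact ⟨hxy, fun hh => he hh.1⟩)
        have hG'conn : G'.Connected := by
          rw [connected_iff]
          refine ⟨fun x y => ?_, hG.nonempty⟩
          obtain ⟨w⟩ := hG.preconnected x y
          induction w with
          | nil => exact Reachable.refl _
          | cons h p ihw => exact (hadj' _ _ h).trans ihw
        have hcard : G'.edgeSet.ncard < n := by
          rw [← hn]
          apply Set.ncard_lt_ncard _ (G.edgeSet.toFinite)
          rw [Set.ssubset_iff_of_subset (edgeSet_mono hle)]
          refine ⟨s(v, b), ?_, ?_⟩
          · simpa using hadj
          · simp [hG']
        obtain ⟨T, hT, hTtree⟩ := ih _ hcard G' hG'conn rfl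
        exact ⟨T, hT.trans hle, hTtree⟩

lemma tc_singleton {W : Type*} (m : ℕ) (H : SimpleGraph W) (v : W) :
    IsTreeConn m (H.induce {v}) := by
  refine ⟨fun _ => ⊥, fun _ => bot_le, fun _ => ⟨?_, isAcyclic_bot⟩, fun i j _ => by simp⟩
  have : ∀ a b : ({v} : Set W), a = b := by
    rintro ⟨a, ha⟩ ⟨b, hb⟩
    simp only [Set.mem_singleton_iff] at ha hb
    subst ha; subst hb; rfl
  rw [connected_iff]
  exact ⟨fun a b => this a b ▸ Reachable.refl a, ⟨⟨v, rfl⟩⟩⟩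


lemma tc_union {W : Type*} [Fintype W] (m : ℕ) (H : SimpleGraph W) {X Y : Set W}
    (hX : IsTreeConn m (H.induce X)) (hY : IsTreeConn m (H.induce Y))
    {v₀ : W} (hvX : v₀ ∈ X) (hvY : v₀ ∈ Y) :
    IsTreeConn m (H.induce (X ∪ Y)) := by
  classical
  obtain ⟨T, hTle, hTtree, hTdisj⟩ := hX
  obtain ⟨T', hT'le, hT'tree, hT'disj⟩ := hY
  set Z := X ∪ Y with hZ
  let F : Fin m → SimpleGraph ↑Z := fun i =>
    { Adj := fun a b =>
        (∃ (ha : ↑a ∈ X) (hb : ↑b ∈ X), (T i).Adj ⟨↑a, ha⟩ ⟨↑b, hb⟩) ∨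
        ((∃ (ha : ↑a ∈ Y) (hb : ↑b ∈ Y), (T' i).Adj ⟨↑a, ha⟩ ⟨↑b, hb⟩) ∧
          ¬((↑a : W) ∈ X ∧ (↑b : W) ∈ X))
      symm := ⟨by
        rintro a b (⟨ha, hb, h⟩ | ⟨⟨ha, hb, h⟩, hn⟩)
        · exact Or.inl ⟨hb, ha, h.symm⟩
        · exact Or.inr ⟨⟨hb, ha, h.symm⟩, fun hc => hn ⟨hc.2, hc.1⟩⟩⟩
      loopless := ⟨by
        rintro a (⟨ha, hb, h⟩ | ⟨⟨ha, hb, h⟩, hn⟩)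
        · exact (T _).loopless.irrefl _ h
        · exact (T' _).loopless.irrefl _ h⟩ }
  have hFle : ∀ i, F i ≤ H.induce Z := by
    rintro i a b (⟨ha, hb, h⟩ | ⟨⟨ha, hb, h⟩, _⟩)
    · exact hTle i h
    · exact hT'le i h
  have hv₀Z : v₀ ∈ Z := Or.inl hvX
  -- reach to v0 from X side
  have claimA : ∀ i (a : ↑X), (F i).Reachable ⟨↑a, Or.inl a.2⟩ ⟨v₀, hv₀Z⟩ := by
    intro i a
    exact ((hTtree i).isConnected.preconnected a ⟨v₀, hvX⟩).map
      (⟨fun x => ⟨↑x, Or.inl x.2⟩, fun {x y} h => Or.inl ⟨x.2, y.2, h⟩⟩ : T i →g F i)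
  have claimB : ∀ i (a : ↑Y), (F i).Reachable ⟨↑a, Or.inr a.2⟩ ⟨v₀, hv₀Z⟩ := by
    intro i a
    have aux : ∀ (a b : ↑Y), (T' i).Walk a b →
        (F i).Reachable ⟨↑b, Or.inr b.2⟩ ⟨v₀, hv₀Z⟩ →
        (F i).Reachable ⟨↑a, Or.inr a.2⟩ ⟨v₀, hv₀Z⟩ := by
      intro a b w
      induction w with
      | nil => exact fun h => h
      | @cons c d e hadj p ih =>
        intro hb
        by_cases hcX : (↑c : W) ∈ X ∧ (↑d : W) ∈ X
        · have := claimA i ⟨↑c, hcX.1⟩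
          have heq : (⟨↑c, Or.inr c.2⟩ : ↑Z) = ⟨↑c, Or.inl hcX.1⟩ := Subtype.ext rfl
          rw [heq]
          exact this
        · have hadj' : (F i).Adj ⟨↑c, Or.inr c.2⟩ ⟨↑d, Or.inr d.2⟩ :=
            Or.inr ⟨⟨c.2, d.2, hadj⟩, hcX⟩
          exact hadj'.reachable.trans (ih hb)
    have := (hT'tree i).isConnected.preconnected a ⟨v₀, hvY⟩
    obtain ⟨w⟩ := this
    exact aux a ⟨v₀, hvY⟩ w (by
      have heq : (⟨v₀, Or.inr hvY⟩ : ↑Z) = ⟨v₀, hv₀Z⟩ := Subtype.ext rfl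
      rw [heq])
  have hFconn : ∀ i, (F i).Connected := by
    intro i
    rw [connected_iff]
    have key : ∀ a : ↑Z, (F i).Reachable a ⟨v₀, hv₀Z⟩ := by
      rintro ⟨a, ha | ha⟩
      · exact claimA i ⟨a, ha⟩
      · exact claimB i ⟨a, ha⟩
    exact ⟨fun a b => (key a).trans (key b).symm, ⟨⟨v₀, hv₀Z⟩⟩⟩
  have hFdisj : ∀ i j, i ≠ j → Disjoint (F i).edgeSet (F j).edgeSet := by
    intro i j hij
    rw [Set.disjoint_left]
    intro e hei hej
    induction e with
    | _ a b =>
      rw [mem_edgeSet] at hei hej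
      rcases hei with ⟨ha, hb, h⟩ | ⟨⟨ha, hb, h⟩, hn⟩ <;>
        rcases hej with ⟨ha', hb', h'⟩ | ⟨⟨ha', hb', h'⟩, hn'⟩
      · exact Set.disjoint_left.mp (hTdisj i j hij) ((T i).mem_edgeSet.mpr h)
          ((T j).mem_edgeSet.mpr h')
      · exact hn' ⟨ha, hb⟩
      · exact hn ⟨ha', hb'⟩
      · exact Set.disjoint_left.mp (hT'disj i j hij) ((T' i).mem_edgeSet.mpr h)
          ((T' j).mem_edgeSet.mpr h')
  choose Tr hTrle hTrtree using fun i => exists_tree_le (F i) (hFconn i)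
  exact ⟨Tr, fun i => (hTrle i).trans (hFle i), hTrtree,
    fun i j hij => Set.disjoint_of_subset (edgeSet_mono (hTrle i)) (edgeSet_mono (hTrle j))
      (hFdisj i j hij)⟩


lemma mem_mComp_self {W : Type*} (m : ℕ) (H : SimpleGraph W) (v : W) :
    v ∈ mComp m H v :=
  ⟨{v}, ⟨rfl, tc_singleton m H v⟩, rfl⟩

lemma tc_mComp {W : Type*} [Fintype W] (m : ℕ) (H : SimpleGraph W) (v : W) :
    IsTreeConn m (H.induce (mComp m H v)) := by
  classical
  set 𝒮 : Set (Set W) := {X : Set W | v ∈ X ∧ IsTreeConn m (H.induce X)} with h𝒮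
  have hsing : {v} ∈ 𝒮 := ⟨rfl, tc_singleton m H v⟩
  have main : ∀ 𝒯 : Set (Set W), 𝒯.Finite → (∀ X ∈ 𝒯, v ∈ X ∧ IsTreeConn m (H.induce X)) →
      IsTreeConn m (H.induce (⋃₀ insert {v} 𝒯)) := by
    intro 𝒯 hfin
    refine Set.Finite.induction_on (motive := fun 𝒯 _ =>
      (∀ X ∈ 𝒯, v ∈ X ∧ IsTreeConn m (H.induce X)) →
        IsTreeConn m (H.induce (⋃₀ insert {v} 𝒯))) 𝒯 hfin ?_ ?_
    · intro _
      rw [Set.sUnion_insert, Set.sUnion_empty, Set.union_empty]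
      exact tc_singleton m H v
    · intro X 𝒯' hXmem hfin' ih hprop
      have h1 : insert {v} (insert X 𝒯') = insert X (insert {v} 𝒯') := Set.insert_comm _ _ _
      rw [h1, Set.sUnion_insert]
      have hXp := hprop X (Set.mem_insert _ _)
      have ihp := ih (fun Y hY => hprop Y (Set.mem_insert_of_mem _ hY))
      exact tc_union m H hXp.2 ihp hXp.1 (Set.mem_sUnion.mpr ⟨{v}, Set.mem_insert _ _, rfl⟩)
  have heq : mComp m H v = ⋃₀ insert {v} 𝒮 := by
    rw [Set.insert_eq_self.mpr hsing]; rfl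
  rw [heq]
  exact main 𝒮 (Set.toFinite _) (fun X hX => hX)

lemma mComp_subset_of_mem {W : Type*} [Fintype W] {m : ℕ} {H : SimpleGraph W} {v w : W}
    (h : w ∈ mComp m H v) : mComp m H v ⊆ mComp m H w :=
  Set.subset_sUnion_of_mem ⟨h, tc_mComp m H v⟩

lemma mComp_eq_of_mem {W : Type*} [Fintype W] {m : ℕ} {H : SimpleGraph W} {v w : W}
    (h : w ∈ mComp m H v) : mComp m H w = mComp m H v := by
  have h1 := mComp_subset_of_mem h
  have h2 := mComp_subset_of_mem (h1 (mem_mComp_self m H v))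
  exact Set.Subset.antisymm h2 h1

lemma mComp_eq_iff_mem {W : Type*} [Fintype W] {m : ℕ} {H : SimpleGraph W} {v w : W} :
    mComp m H w = mComp m H v ↔ w ∈ mComp m H v := by
  constructor
  · intro h; rw [← h]; exact mem_mComp_self m H w
  · exact mComp_eq_of_mem

lemma tc_edges {W : Type*} [Fintype W] {m : ℕ} (hm : 0 < m) {H : SimpleGraph W} {Q : Set W}
    (h : IsTreeConn m (H.induce Q)) :
    (m : ℤ) * (Q.ncard - 1) ≤ ({e ∈ H.edgeSet | ∀ v ∈ e, v ∈ Q}.ncard : ℤ) := by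
  classical
  obtain ⟨T, hTle, hTtree, hTdisj⟩ := h
  set tgtS : Set (Sym2 W) := {e ∈ H.edgeSet | ∀ v ∈ e, v ∈ Q} with htgtS
  set tgt : Finset (Sym2 W) := (Set.toFinite tgtS).toFinset with htgt
  have hncard : tgtS.ncard = tgt.card := Set.ncard_eq_toFinset_card _ _
  have hinj : Function.Injective (Subtype.val : ↑Q → W) := Subtype.val_injective
  set f : Fin m → Finset (Sym2 W) :=
    fun i => (T i).edgeFinset.image (Sym2.map (Subtype.val : ↑Q → W)) with hf
  have hsub : ∀ i, f i ⊆ tgt := by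
    intro i e he
    simp only [hf, Finset.mem_image, mem_edgeFinset] at he
    obtain ⟨e', he', rfl⟩ := he
    induction e' with
    | _ x y =>
      rw [mem_edgeSet] at he'
      have hadj : H.Adj ↑x ↑y := hTle i he'
      simp only [htgt, Set.Finite.mem_toFinset, htgtS, Set.mem_setOf_eq, Sym2.map_pair_eq]
      refine ⟨hadj, ?_⟩
      intro v hv
      rw [Sym2.mem_iff] at hv
      rcases hv with rfl | rfl
      · exact x.2
      · exact y.2
  have hdisj : ∀ i j, i ≠ j → Disjoint (f i) (f j) := by
    intro i j hij
    rw [Finset.disjoint_left]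
    intro e hei hej
    simp only [hf, Finset.mem_image] at hei hej
    obtain ⟨e1, he1, heq1⟩ := hei
    obtain ⟨e2, he2, heq2⟩ := hej
    have : e1 = e2 := Sym2.map.injective hinj (heq1.trans heq2.symm)
    subst this
    rw [mem_edgeFinset] at he1 he2
    exact Set.disjoint_left.mp (hTdisj i j hij) he1 he2
  have hQcard : Fintype.card ↑Q = Q.ncard := by
    rw [Set.ncard_eq_toFinset_card', Set.toFinset_card]
  have hcard : ∀ i, (f i).card = Q.ncard - 1 := by
    intro i
    rw [hf]
    rw [Finset.card_image_of_injective _ (Sym2.map.injective hinj)]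
    have := (hTtree i).card_edgeFinset
    omega
  have hQpos : 1 ≤ Q.ncard := by
    have : Nonempty ↑Q := (hTtree ⟨0, hm⟩).isConnected.nonempty
    rw [← hQcard]
    exact Fintype.card_pos
  have hbig : m * (Q.ncard - 1) ≤ tgt.card := by
    calc m * (Q.ncard - 1) = ∑ _i : Fin m, (Q.ncard - 1) := by
          simp [Finset.sum_const, mul_comm]
      _ = ∑ i : Fin m, (f i).card := by simp [hcard]
      _ = ((Finset.univ : Finset (Fin m)).biUnion f).card :=
          (Finset.card_biUnion (fun i _ j _ hij => hdisj i j hij)).symm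
      _ ≤ _ := Finset.card_le_card (Finset.biUnion_subset.mpr (fun i _ => hsub i))
  rw [hncard]
  have h1 : ((Q.ncard : ℤ) - 1) = ((Q.ncard - 1 : ℕ) : ℤ) := by
    rw [Nat.cast_sub hQpos]; norm_num
  rw [h1]
  exact_mod_cast hbig


lemma parts_bound {W : Type*} [Fintype W] {m : ℕ} (hm : 0 < m) (H : SimpleGraph W) :
    (crossE m H : ℤ) + m * Fintype.card W ≤
      (H.edgeSet.ncard : ℤ) + m * (Set.range (mComp m H)).ncard := by
  classical
  set P : Finset (Set W) := (Set.toFinite (Set.range (mComp m H))).toFinset with hP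
  have memQ : ∀ Q ∈ P, ∀ x ∈ Q, Q = mComp m H x := by
    intro Q hQ x hx
    rw [hP, Set.Finite.mem_toFinset] at hQ
    obtain ⟨v, rfl⟩ := hQ
    exact (mComp_eq_of_mem hx).symm
  have memP : ∀ x : W, mComp m H x ∈ P := by
    intro x
    rw [hP, Set.Finite.mem_toFinset]
    exact ⟨x, rfl⟩
  set E : Finset (Sym2 W) := (Set.toFinite H.edgeSet).toFinset with hE
  set crossF : Finset (Sym2 W) :=
    (Set.toFinite {e ∈ H.edgeSet | ∃ u ∈ e, ∃ w ∈ e, mComp m H u ≠ mComp m H w}).toFinset with hcF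
  set NC : Finset (Sym2 W) :=
    (Set.toFinite {e ∈ H.edgeSet | ¬∃ u ∈ e, ∃ w ∈ e, mComp m H u ≠ mComp m H w}).toFinset with hNC
  set inF : Set W → Finset (Sym2 W) :=
    fun Q => (Set.toFinite {e ∈ H.edgeSet | ∀ v ∈ e, v ∈ Q}).toFinset with hinF
  -- part sizes sum to card W
  have hcover : P.biUnion (fun Q => (Set.toFinite Q).toFinset) = Finset.univ := by
    apply Finset.eq_univ_of_forall
    intro w
    rw [Finset.mem_biUnion]
    exact ⟨mComp m H w, memP w, by rw [Set.Finite.mem_toFinset]; exact mem_mComp_self m H w⟩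
  have hpdisj : ∀ Q₁ ∈ P, ∀ Q₂ ∈ P, Q₁ ≠ Q₂ →
      Disjoint ((Set.toFinite Q₁).toFinset) ((Set.toFinite Q₂).toFinset) := by
    intro Q₁ h₁ Q₂ h₂ hne
    rw [Finset.disjoint_left]
    intro x hx1 hx2
    rw [Set.Finite.mem_toFinset] at hx1 hx2
    exact hne ((memQ _ h₁ _ hx1).trans (memQ _ h₂ _ hx2).symm)
  have hsizes : ∑ Q ∈ P, (Q.ncard : ℤ) = Fintype.card W := by
    have : ∑ Q ∈ P, ((Set.toFinite Q).toFinset).card = Fintype.card W := by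
      rw [← Finset.card_biUnion hpdisj, hcover, Finset.card_univ]
    calc ∑ Q ∈ P, (Q.ncard : ℤ) = ∑ Q ∈ P, (((Set.toFinite Q).toFinset).card : ℤ) := by
          refine Finset.sum_congr rfl (fun Q _ => ?_)
          rw [Set.ncard_eq_toFinset_card _ (Set.toFinite Q)]
      _ = Fintype.card W := by exact_mod_cast congrArg Nat.cast this
  -- E splits
  have hsplit : crossF.card + NC.card = E.card := by
    rw [← Finset.card_union_of_disjoint]
    · congr 1
      ext e
      simp only [hcF, hNC, hE, Finset.mem_union, Set.Finite.mem_toFinset, Set.mem_setOf_eq]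
      constructor
      · rintro (⟨h, _⟩ | ⟨h, _⟩) <;> exact h
      · intro he
        by_cases hp : ∃ u ∈ e, ∃ w ∈ e, mComp m H u ≠ mComp m H w
        · exact Or.inl ⟨he, hp⟩
        · exact Or.inr ⟨he, hp⟩
    · rw [Finset.disjoint_left]
      intro e h1 h2
      rw [hcF, Set.Finite.mem_toFinset] at h1
      rw [hNC, Set.Finite.mem_toFinset] at h2
      exact h2.2 h1.2
  -- inF Q disjoint and inside NC
  have hin_sub : ∀ Q ∈ P, inF Q ⊆ NC := by
    intro Q hQ e he
    rw [hinF, Set.Finite.mem_toFinset] at he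
    rw [hNC, Set.Finite.mem_toFinset]
    refine ⟨he.1, ?_⟩
    rintro ⟨u, hu, w, hw, hne⟩
    exact hne (((memQ Q hQ u (he.2 u hu)).symm).trans (memQ Q hQ w (he.2 w hw)))
  have hin_disj : ∀ Q₁ ∈ P, ∀ Q₂ ∈ P, Q₁ ≠ Q₂ → Disjoint (inF Q₁) (inF Q₂) := by
    intro Q₁ h₁ Q₂ h₂ hne
    rw [Finset.disjoint_left]
    intro e he1 he2
    rw [hinF, Set.Finite.mem_toFinset] at he1 he2
    induction e with
    | _ a b =>
      have ha1 : a ∈ Q₁ := he1.2 a (Sym2.mem_mk_left a b)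
      have ha2 : a ∈ Q₂ := he2.2 a (Sym2.mem_mk_left a b)
      exact hne ((memQ _ h₁ _ ha1).trans (memQ _ h₂ _ ha2).symm)
  have hin_total : ∑ Q ∈ P, ((inF Q).card : ℤ) ≤ NC.card := by
    have : ∑ Q ∈ P, (inF Q).card ≤ NC.card := by
      rw [← Finset.card_biUnion hin_disj]
      exact Finset.card_le_card (Finset.biUnion_subset.mpr hin_sub)
    exact_mod_cast this
  have htc : ∀ Q ∈ P, (m : ℤ) * (Q.ncard - 1) ≤ ((inF Q).card : ℤ) := by
    intro Q hQ
    have hQ' : Q ∈ Set.range (mComp m H) := by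
      rw [hP, Set.Finite.mem_toFinset] at hQ; exact hQ
    obtain ⟨v, rfl⟩ := hQ'
    have := tc_edges hm (tc_mComp m H v)
    calc (m : ℤ) * ((mComp m H v).ncard - 1) ≤
        ({e ∈ H.edgeSet | ∀ x ∈ e, x ∈ mComp m H v}.ncard : ℤ) := this
      _ = ((inF (mComp m H v)).card : ℤ) := by
          rw [hinF]
          exact_mod_cast congrArg Nat.cast (Set.ncard_eq_toFinset_card _ _)
  -- assemble
  have hcrossE : (crossE m H : ℤ) = crossF.card := by
    rw [crossE, hcF]
    exact_mod_cast congrArg Nat.cast (Set.ncard_eq_toFinset_card _ _)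
  have hedge : (H.edgeSet.ncard : ℤ) = E.card := by
    rw [hE]
    exact_mod_cast congrArg Nat.cast (Set.ncard_eq_toFinset_card _ _)
  have hrange : ((Set.range (mComp m H)).ncard : ℤ) = P.card := by
    rw [hP]
    exact_mod_cast congrArg Nat.cast (Set.ncard_eq_toFinset_card _ _)
  rw [hcrossE, hedge, hrange]
  have key : (m : ℤ) * Fintype.card W ≤ (NC.card : ℤ) + m * P.card := by
    have hsum : ∑ Q ∈ P, ((Q.ncard : ℤ) - 1) = (Fintype.card W : ℤ) - P.card := by
      rw [Finset.sum_sub_distrib, hsizes]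
      simp
    calc (m : ℤ) * Fintype.card W = ∑ Q ∈ P, (m : ℤ) * ((Q.ncard : ℤ) - 1) + m * P.card := by
          rw [← Finset.mul_sum, hsum]
          ring
      _ ≤ ∑ Q ∈ P, ((inF Q).card : ℤ) + m * P.card := by
          gcongr with Q hQ
          exact htc Q hQ
      _ ≤ (NC.card : ℤ) + m * P.card := by gcongr
  calc (crossF.card : ℤ) + m * Fintype.card W ≤ crossF.card + (NC.card + m * P.card) := by
        linarith
    _ = (E.card : ℤ) + m * P.card := by
        have := hsplit
        push_cast [← this]
        ring


lemma deg_bound {V : Type*} [Fintype V] (G : SimpleGraph V) (S : Finset V) :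
    2 * (eIn G ↑S : ℤ) + (cutE G ↑S : ℤ) ≤ ∑ v ∈ S, ((G.neighborSet v).ncard : ℤ) := by
  classical
  set nb : V → Finset V := fun v => (Set.toFinite (G.neighborSet v)).toFinset with hnb
  set pairs : Finset (V × V) := S.biUnion (fun v => (nb v).image (fun w => (v, w))) with hpairs
  have hmem_pairs : ∀ p : V × V, p ∈ pairs ↔ p.1 ∈ S ∧ G.Adj p.1 p.2 := by
    intro p
    rw [hpairs, Finset.mem_biUnion]
    constructor
    · rintro ⟨v, hv, hp⟩
      rw [Finset.mem_image] at hp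
      obtain ⟨w, hw, rfl⟩ := hp
      rw [hnb, Set.Finite.mem_toFinset, mem_neighborSet] at hw
      exact ⟨hv, hw⟩
    · rintro ⟨h1, h2⟩
      exact ⟨p.1, h1, Finset.mem_image.mpr ⟨p.2, by
        rw [hnb, Set.Finite.mem_toFinset, mem_neighborSet]; exact h2, rfl⟩⟩
  have hcard_pairs : pairs.card = ∑ v ∈ S, (G.neighborSet v).ncard := by
    rw [hpairs, Finset.card_biUnion]
    · refine Finset.sum_congr rfl (fun v _ => ?_)
      rw [Finset.card_image_of_injective _ (fun a b h => (Prod.mk.injEq _ _ _ _).mp h |>.2),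
        ← Set.ncard_eq_toFinset_card _ (Set.toFinite _)]
    · intro x _ y _ hxy
      rw [Function.onFun, Finset.disjoint_left]
      rintro p hp hp'
      rw [Finset.mem_image] at hp hp'
      obtain ⟨w, _, rfl⟩ := hp
      obtain ⟨w', _, h⟩ := hp'
      exact hxy (congrArg Prod.fst h).symm
  set eInF : Finset (Sym2 V) :=
    (Set.toFinite {e ∈ G.edgeSet | ∀ v ∈ e, v ∈ (↑S : Set V)}).toFinset with heInF
  set cutF : Finset (Sym2 V) :=
    (Set.toFinite {e ∈ G.edgeSet | ∃ u ∈ e, ∃ w ∈ e, u ∈ (↑S : Set V) ∧ w ∉ (↑S : Set V)}).toFinset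
    with hcutF
  have hdisjF : Disjoint eInF cutF := by
    rw [Finset.disjoint_left]
    intro e h1 h2
    rw [heInF, Set.Finite.mem_toFinset] at h1
    rw [hcutF, Set.Finite.mem_toFinset] at h2
    obtain ⟨_, u, hu, w, hw, _, hwS⟩ := h2
    exact hwS (h1.2 w hw)
  set ψ : V × V → Sym2 V := fun p => s(p.1, p.2) with hψ
  have hmaps : ∀ p ∈ pairs, ψ p ∈ eInF ∪ cutF := by
    intro p hp
    rw [hmem_pairs] at hp
    by_cases h2 : p.2 ∈ S
    · apply Finset.mem_union_left
      rw [heInF, Set.Finite.mem_toFinset]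
      refine ⟨hp.2, ?_⟩
      intro v hv
      rw [hψ, Sym2.mem_iff] at hv
      rcases hv with rfl | rfl
      · exact hp.1
      · exact h2
    · apply Finset.mem_union_right
      rw [hcutF, Set.Finite.mem_toFinset]
      exact ⟨hp.2, p.1, Sym2.mem_mk_left _ _, p.2, Sym2.mem_mk_right _ _, hp.1, by
        simpa using h2⟩
  have hfib := Finset.card_eq_sum_card_fiberwise hmaps
  have hfib_in : ∀ e ∈ eInF, 2 ≤ (pairs.filter (fun p => ψ p = e)).card := by
    intro e he
    rw [heInF, Set.Finite.mem_toFinset] at he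
    induction e with
    | _ a b =>
      have hadj : G.Adj a b := he.1
      have haS : a ∈ S := he.2 a (Sym2.mem_mk_left a b)
      have hbS : b ∈ S := he.2 b (Sym2.mem_mk_right a b)
      have hne : a ≠ b := G.ne_of_adj hadj
      have hsub : ({(a, b), (b, a)} : Finset (V × V)) ⊆
          pairs.filter (fun p => ψ p = s(a, b)) := by
        intro p hp
        rw [Finset.mem_insert, Finset.mem_singleton] at hp
        rw [Finset.mem_filter, hmem_pairs]
        rcases hp with rfl | rfl
        · exact ⟨⟨haS, hadj⟩, rfl⟩
        · exact ⟨⟨hbS, hadj.symm⟩, Sym2.eq_swap⟩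
      calc 2 = ({(a, b), (b, a)} : Finset (V × V)).card := by
            rw [Finset.card_insert_of_notMem (by simp [hne]), Finset.card_singleton]
        _ ≤ _ := Finset.card_le_card hsub
  have hfib_cut : ∀ e ∈ cutF, 1 ≤ (pairs.filter (fun p => ψ p = e)).card := by
    intro e he
    rw [hcutF, Set.Finite.mem_toFinset] at he
    induction e with
    | _ a b =>
      obtain ⟨hadj, u, hu, w, hw, huS, hwS⟩ := he
      rw [Sym2.mem_iff] at hu hw
      apply Finset.card_pos.mpr
      -- one of (a,b),(b,a) works: pick the endpoint in S
      have : (a ∈ S ∧ b ∉ S) ∨ (b ∈ S ∧ a ∉ S) := by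
        rcases hu with rfl | rfl <;> rcases hw with rfl | rfl
        · exact absurd huS hwS
        · exact Or.inl ⟨huS, hwS⟩
        · exact Or.inr ⟨huS, hwS⟩
        · exact absurd huS hwS
      rcases this with ⟨h1, _⟩ | ⟨h1, _⟩
      · exact ⟨(a, b), by rw [Finset.mem_filter, hmem_pairs]; exact ⟨⟨h1, hadj⟩, rfl⟩⟩
      · exact ⟨(b, a), by
          rw [Finset.mem_filter, hmem_pairs]
          exact ⟨⟨h1, hadj.symm⟩, Sym2.eq_swap⟩⟩
  have hsum_split : ∑ e ∈ eInF ∪ cutF, (pairs.filter (fun p => ψ p = e)).card =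
      ∑ e ∈ eInF, (pairs.filter (fun p => ψ p = e)).card +
      ∑ e ∈ cutF, (pairs.filter (fun p => ψ p = e)).card :=
    Finset.sum_union hdisjF
  have h1 : 2 * eInF.card ≤ ∑ e ∈ eInF, (pairs.filter (fun p => ψ p = e)).card := by
    calc 2 * eInF.card = ∑ _e ∈ eInF, 2 := by rw [Finset.sum_const]; ring
      _ ≤ _ := Finset.sum_le_sum hfib_in
  have h2 : cutF.card ≤ ∑ e ∈ cutF, (pairs.filter (fun p => ψ p = e)).card := by
    calc cutF.card = ∑ _e ∈ cutF, 1 := by rw [Finset.sum_const]; ring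
      _ ≤ _ := Finset.sum_le_sum hfib_cut
  have heIn : eIn G ↑S = eInF.card := Set.ncard_eq_toFinset_card _ _
  have hcut : cutE G ↑S = cutF.card := Set.ncard_eq_toFinset_card _ _
  have : 2 * eInF.card + cutF.card ≤ ∑ v ∈ S, (G.neighborSet v).ncard := by
    rw [← hcard_pairs, hfib, hsum_split]
    omega
  rw [heIn, hcut]
  calc 2 * (eInF.card : ℤ) + cutF.card = ((2 * eInF.card + cutF.card : ℕ) : ℤ) := by push_cast; ring
    _ ≤ _ := by exact_mod_cast this


lemma cut_sum {V : Type*} [Fintype V] (m k : ℕ) (G : SimpleGraph V)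
    (hconn : EdgeConn k G) (S : Finset V) (hS : S.Nonempty) :
    (k : ℤ) * ((Set.range (mComp m (G.induce ((↑S : Set V)ᶜ)))).ncard : ℤ) ≤
      2 * (crossE m (G.induce ((↑S : Set V)ᶜ)) : ℤ) + (cutE G ↑S : ℤ) := by
  classical
  set SC : Set V := (↑S : Set V)ᶜ with hSC
  set H : SimpleGraph ↥SC := G.induce SC with hH
  set P : Finset (Set ↥SC) := (Set.toFinite (Set.range (mComp m H))).toFinset with hP
  have memQ : ∀ Q ∈ P, ∀ x ∈ Q, Q = mComp m H x := by
    intro Q hQ x hx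
    rw [hP, Set.Finite.mem_toFinset] at hQ
    obtain ⟨v, rfl⟩ := hQ
    exact (mComp_eq_of_mem hx).symm
  -- the cut set of a subset, as a Finset
  set cutF : Set V → Finset (Sym2 V) := fun X =>
    (Set.toFinite {e ∈ G.edgeSet | ∃ u ∈ e, ∃ w ∈ e, u ∈ X ∧ w ∉ X}).toFinset with hcutF
  have hcutE : ∀ X : Set V, cutE G X = (cutF X).card := by
    intro X
    rw [hcutF]
    exact Set.ncard_eq_toFinset_card _ _
  -- Step 1 : each part has a big cut
  have step1 : ∀ Q ∈ P, (k : ℤ) ≤ (cutF (Subtype.val '' Q)).card := by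
    intro Q hQ
    rw [hP, Set.Finite.mem_toFinset] at hQ
    obtain ⟨v, rfl⟩ := hQ
    rw [← hcutE]
    have h1 : (Subtype.val '' mComp m H v).Nonempty :=
      ⟨↑v, v, mem_mComp_self m H v, rfl⟩
    have h2 : (Subtype.val '' mComp m H v)ᶜ.Nonempty := by
      obtain ⟨s, hs⟩ := hS
      refine ⟨s, ?_⟩
      rintro ⟨x, _, rfl⟩
      exact x.2 (by simpa using hs)
    exact_mod_cast hconn _ h1 h2
  -- Step 2 : sum over parts
  have step2 : (k : ℤ) * P.card ≤ ∑ Q ∈ P, ((cutF (Subtype.val '' Q)).card : ℤ) := by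
    calc (k : ℤ) * P.card = ∑ _Q ∈ P, (k : ℤ) := by rw [Finset.sum_const]; ring
      _ ≤ _ := Finset.sum_le_sum step1
  -- cross edges (ambient) and S-cut edges
  set A : Finset (Sym2 V) :=
    ((Set.toFinite {e ∈ H.edgeSet | ∃ u ∈ e, ∃ w ∈ e, mComp m H u ≠ mComp m H w}).toFinset).image
      (Sym2.map (Subtype.val : ↥SC → V)) with hA
  have hAcard : A.card ≤ crossE m H := by
    rw [hA, crossE]
    calc _ ≤ ((Set.toFinite {e ∈ H.edgeSet | ∃ u ∈ e, ∃ w ∈ e,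
          mComp m H u ≠ mComp m H w}).toFinset).card := Finset.card_image_le
      _ = _ := (Set.ncard_eq_toFinset_card _ _).symm
  set B : Finset (Sym2 V) := cutF ↑S with hB
  -- per-vertex part-membership counting
  have hfilter_mem : ∀ (c : V) (hc : c ∉ S),
      ∀ Q ∈ P, c ∈ Subtype.val '' Q → Q = mComp m H ⟨c, by simpa [hSC] using hc⟩ := by
    intro c hc Q hQ hcQ
    obtain ⟨x, hx, hxc⟩ := hcQ
    have : x = ⟨c, by simpa [hSC] using hc⟩ := Subtype.ext hxc
    subst this
    exact memQ Q hQ _ hx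
  have hfilter_empty : ∀ (c : V), c ∈ S → ∀ Q ∈ P, c ∉ Subtype.val '' Q := by
    intro c hc Q hQ
    rintro ⟨x, _, rfl⟩
    exact x.2 (by simpa using hc)
  -- pointwise bound
  have pointwise : ∀ e : Sym2 V,
      ((P.filter (fun Q => e ∈ cutF (Subtype.val '' Q))).card : ℤ) ≤
        2 * (if e ∈ A then 1 else 0) + (if e ∈ B then 1 else 0) := by
    intro e
    induction e with
    | _ a b =>
      by_cases hedge : s(a, b) ∈ G.edgeSet
      case neg =>
        have : P.filter (fun Q => s(a, b) ∈ cutF (Subtype.val '' Q)) = ∅ := by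
          rw [Finset.filter_eq_empty_iff]
          intro Q _
          rw [hcutF, Set.Finite.mem_toFinset]
          rintro ⟨he, _⟩
          exact hedge he
        rw [this]
        simp only [Finset.card_empty, Nat.cast_zero]
        positivity
      case pos =>
      have hcut_mem : ∀ Q : Set ↥SC, s(a, b) ∈ cutF (Subtype.val '' Q) ↔
          (s(a, b) ∈ G.edgeSet ∧ (a ∈ Subtype.val '' Q ∧ b ∉ Subtype.val '' Q ∨
            b ∈ Subtype.val '' Q ∧ a ∉ Subtype.val '' Q)) := by
        intro Q
        rw [hcutF, Set.Finite.mem_toFinset]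
        simp only [Set.mem_setOf_eq]
        constructor
        · rintro ⟨he, u, hu, w, hw, huQ, hwQ⟩
          rw [Sym2.mem_iff] at hu hw
          refine ⟨he, ?_⟩
          rcases hu with rfl | rfl <;> rcases hw with rfl | rfl
          · exact absurd huQ hwQ
          · exact Or.inl ⟨huQ, hwQ⟩
          · exact Or.inr ⟨huQ, hwQ⟩
          · exact absurd huQ hwQ
        · rintro ⟨he, ⟨h1, h2⟩ | ⟨h1, h2⟩⟩
          · exact ⟨he, a, Sym2.mem_mk_left _ _, b, Sym2.mem_mk_right _ _, h1, h2⟩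
          · exact ⟨he, b, Sym2.mem_mk_right _ _, a, Sym2.mem_mk_left _ _, h1, h2⟩
      by_cases haS : a ∈ S <;> by_cases hbS : b ∈ S
      -- both in S : count is zero
      · have : P.filter (fun Q => s(a, b) ∈ cutF (Subtype.val '' Q)) = ∅ := by
          rw [Finset.filter_eq_empty_iff]
          intro Q hQ hmem
          rw [hcut_mem] at hmem
          rcases hmem.2 with ⟨h1, _⟩ | ⟨h1, _⟩
          · exact hfilter_empty a haS Q hQ h1
          · exact hfilter_empty b hbS Q hQ h1
        rw [this]
        simp only [Finset.card_empty, Nat.cast_zero]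
        positivity
      -- a ∈ S, b ∉ S : count ≤ 1, edge in B
      · have hsub : P.filter (fun Q => s(a, b) ∈ cutF (Subtype.val '' Q)) ⊆
            {mComp m H ⟨b, by simpa [hSC] using hbS⟩} := by
          intro Q hQ
          rw [Finset.mem_filter] at hQ
          rw [Finset.mem_singleton]
          rw [hcut_mem] at *
          rcases hQ.2.2 with ⟨h1, _⟩ | ⟨h1, _⟩
          · exact absurd h1 (hfilter_empty a haS Q hQ.1)
          · exact hfilter_mem b hbS Q hQ.1 h1
        have hBmem : s(a, b) ∈ B := by
          rw [hB, hcutF, Set.Finite.mem_toFinset]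
          exact ⟨hedge, a, Sym2.mem_mk_left _ _, b, Sym2.mem_mk_right _ _, haS, hbS⟩
        calc ((P.filter _).card : ℤ) ≤ ({mComp m H ⟨b, by simpa [hSC] using hbS⟩} :
              Finset (Set ↥SC)).card := by exact_mod_cast Finset.card_le_card hsub
          _ = 1 := by simp
          _ ≤ _ := by rw [if_pos hBmem]; split_ifs <;> norm_num
      -- b ∈ S, a ∉ S : symmetric
      · have hsub : P.filter (fun Q => s(a, b) ∈ cutF (Subtype.val '' Q)) ⊆
            {mComp m H ⟨a, by simpa [hSC] using haS⟩} := by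
          intro Q hQ
          rw [Finset.mem_filter] at hQ
          rw [Finset.mem_singleton]
          rw [hcut_mem] at *
          rcases hQ.2.2 with ⟨h1, _⟩ | ⟨h1, _⟩
          · exact hfilter_mem a haS Q hQ.1 h1
          · exact absurd h1 (hfilter_empty b hbS Q hQ.1)
        have hBmem : s(a, b) ∈ B := by
          rw [hB, hcutF, Set.Finite.mem_toFinset]
          exact ⟨hedge, b, Sym2.mem_mk_right _ _, a, Sym2.mem_mk_left _ _, hbS, haS⟩
        calc ((P.filter _).card : ℤ) ≤ ({mComp m H ⟨a, by simpa [hSC] using haS⟩} :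
              Finset (Set ↥SC)).card := by exact_mod_cast Finset.card_le_card hsub
          _ = 1 := by simp
          _ ≤ _ := by rw [if_pos hBmem]; split_ifs <;> norm_num
      -- both outside S
      · set a' : ↥SC := ⟨a, by simpa [hSC] using haS⟩ with ha'
        set b' : ↥SC := ⟨b, by simpa [hSC] using hbS⟩ with hb'
        by_cases hcc : mComp m H a' = mComp m H b'
        · -- same component : count zero
          have : P.filter (fun Q => s(a, b) ∈ cutF (Subtype.val '' Q)) = ∅ := by
            rw [Finset.filter_eq_empty_iff]
            intro Q hQ hmem
            rw [hcut_mem] at hmem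
            rcases hmem.2 with ⟨h1, h2⟩ | ⟨h1, h2⟩
            · apply h2
              have hQa := hfilter_mem a haS Q hQ h1
              refine ⟨b', ?_, rfl⟩
              rw [hQa]
              show b' ∈ mComp m H a'
              rw [hcc]
              exact mem_mComp_self m H b'
            · apply h2
              have hQb := hfilter_mem b hbS Q hQ h1
              refine ⟨a', ?_, rfl⟩
              rw [hQb]
              show a' ∈ mComp m H b'
              rw [← hcc]
              exact mem_mComp_self m H a'
          rw [this]
          simp only [Finset.card_empty, Nat.cast_zero]
          positivity
        · -- different components : count ≤ 2, edge in A
          have hsub : P.filter (fun Q => s(a, b) ∈ cutF (Subtype.val '' Q)) ⊆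
              {mComp m H a', mComp m H b'} := by
            intro Q hQ
            rw [Finset.mem_filter] at hQ
            rw [Finset.mem_insert, Finset.mem_singleton]
            rw [hcut_mem] at *
            rcases hQ.2.2 with ⟨h1, _⟩ | ⟨h1, _⟩
            · exact Or.inl (hfilter_mem a haS Q hQ.1 h1)
            · exact Or.inr (hfilter_mem b hbS Q hQ.1 h1)
          have hAmem : s(a, b) ∈ A := by
            rw [hA, Finset.mem_image]
            refine ⟨s(a', b'), ?_, by rw [Sym2.map_pair_eq]⟩
            rw [Set.Finite.mem_toFinset]
            refine ⟨?_, a', Sym2.mem_mk_left _ _, b', Sym2.mem_mk_right _ _, hcc⟩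
            rw [hH]
            exact hedge
          calc ((P.filter _).card : ℤ) ≤
              (({mComp m H a', mComp m H b'} : Finset (Set ↥SC)).card : ℤ) := by
                exact_mod_cast Finset.card_le_card hsub
            _ ≤ 2 := by exact_mod_cast Finset.card_insert_le _ _ |>.trans (by simp)
            _ ≤ _ := by rw [if_pos hAmem]; split_ifs <;> norm_num
  -- Step 3 : double counting
  have step3 : ∑ Q ∈ P, ((cutF (Subtype.val '' Q)).card : ℤ) ≤ 2 * A.card + B.card := by
    have cardrepr : ∀ Q : Set ↥SC, ((cutF (Subtype.val '' Q)).card : ℤ) =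
        ∑ e ∈ (Finset.univ : Finset (Sym2 V)),
          (if e ∈ cutF (Subtype.val '' Q) then (1 : ℤ) else 0) := by
      intro Q
      rw [Finset.sum_ite_mem, Finset.univ_inter, Finset.sum_const]
      simp
    have swap : ∑ Q ∈ P, ((cutF (Subtype.val '' Q)).card : ℤ) =
        ∑ e ∈ (Finset.univ : Finset (Sym2 V)),
          ((P.filter (fun Q => e ∈ cutF (Subtype.val '' Q))).card : ℤ) := by
      calc ∑ Q ∈ P, ((cutF (Subtype.val '' Q)).card : ℤ)
          = ∑ Q ∈ P, ∑ e ∈ (Finset.univ : Finset (Sym2 V)),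
            (if e ∈ cutF (Subtype.val '' Q) then (1 : ℤ) else 0) :=
            Finset.sum_congr rfl (fun Q _ => cardrepr Q)
        _ = ∑ e ∈ (Finset.univ : Finset (Sym2 V)), ∑ Q ∈ P,
            (if e ∈ cutF (Subtype.val '' Q) then (1 : ℤ) else 0) := Finset.sum_comm
        _ = _ := by
            refine Finset.sum_congr rfl (fun e _ => ?_)
            rw [Finset.card_filter]
            push_cast
            rfl
    rw [swap]
    calc _ ≤ ∑ e ∈ (Finset.univ : Finset (Sym2 V)),
          (2 * (if e ∈ A then (1 : ℤ) else 0) + (if e ∈ B then 1 else 0)) :=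
          Finset.sum_le_sum (fun e _ => pointwise e)
      _ = 2 * A.card + B.card := by
          rw [Finset.sum_add_distrib, ← Finset.mul_sum]
          congr 1
          · congr 1
            rw [Finset.sum_ite_mem, Finset.univ_inter, Finset.sum_const]
            simp
          · rw [Finset.sum_ite_mem, Finset.univ_inter, Finset.sum_const]
            simp
  -- assemble
  have hrange : ((Set.range (mComp m H)).ncard : ℤ) = P.card := by
    rw [hP]
    exact_mod_cast congrArg Nat.cast (Set.ncard_eq_toFinset_card _ _)
  rw [hrange, hcutE ↑S]
  calc (k : ℤ) * P.card ≤ ∑ Q ∈ P, ((cutF (Subtype.val '' Q)).card : ℤ) := step2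
    _ ≤ 2 * A.card + B.card := step3
    _ ≤ 2 * (crossE m H : ℤ) + (cutF ↑S).card := by
        have := hAcard
        have h2 : (A.card : ℤ) ≤ crossE m H := by exact_mod_cast this
        rw [hB]
        linarith


lemma induce_edges_le {V : Type*} [Fintype V] (G : SimpleGraph V) (S : Set V) :
    ((G.induce S).edgeSet.ncard : ℤ) ≤ (eIn G S : ℤ) := by
  classical
  have hinj := Sym2.map.injective (Subtype.val_injective : Function.Injective ((↑) : ↥S → V))
  have himg : Sym2.map (Subtype.val : ↥S → V) '' (G.induce S).edgeSet ⊆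
      {e ∈ G.edgeSet | ∀ v ∈ e, v ∈ S} := by
    rintro e ⟨e', he', rfl⟩
    induction e' with
    | _ x y =>
      rw [mem_edgeSet] at he'
      rw [Sym2.map_pair_eq]
      refine ⟨he', ?_⟩
      intro v hv
      rw [Sym2.mem_iff] at hv
      rcases hv with rfl | rfl
      · exact x.2
      · exact y.2
  have h1 : (G.induce S).edgeSet.ncard =
      (Sym2.map (Subtype.val : ↥S → V) '' (G.induce S).edgeSet).ncard :=
    (Set.ncard_image_of_injective _ hinj).symm
  rw [eIn, h1]
  exact_mod_cast Set.ncard_le_ncard himg (Set.toFinite _)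


theorem stmt16 {V : Type*} [Fintype V] (m k : ℕ) (hm : 0 < m) (hk : 2 * m ≤ k)
    (G : SimpleGraph V) (hconn : EdgeConn k G) (S : Finset V) (hS : S.Nonempty) :
    (Omega m (G.induce ((↑S : Set V)ᶜ)) : ℚ) ≤
      (∑ v ∈ S, (m : ℚ) * (((G.neighborSet v).ncard : ℚ) - 2 * m) / k) +
        (2 * m : ℚ) / k * (Omega m (G.induce (↑S : Set V)) : ℚ) := by
  classical
  have hk0 : 0 < k := lt_of_lt_of_le (by omega) hk
  set H₁ := G.induce ((↑S : Set V)ᶜ) with hH₁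
  set H₂ := G.induce (↑S : Set V) with hH₂
  set p₁ : ℤ := ((Set.range (mComp m H₁)).ncard : ℤ) with hp₁
  set x₁ : ℤ := (crossE m H₁ : ℤ) with hx₁
  set p₂ : ℤ := ((Set.range (mComp m H₂)).ncard : ℤ) with hp₂
  set x₂ : ℤ := (crossE m H₂ : ℤ) with hx₂
  set c : ℤ := (cutE G ↑S : ℤ) with hc
  set e₂ : ℤ := (eIn G ↑S : ℤ) with he₂
  set E₂ : ℤ := (H₂.edgeSet.ncard : ℤ) with hE₂
  set D : ℤ := ∑ v ∈ S, ((G.neighborSet v).ncard : ℤ) with hD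
  have f1 : (k : ℤ) * p₁ ≤ 2 * x₁ + c := cut_sum m k G hconn S hS
  have f2 : 2 * e₂ + c ≤ D := deg_bound G S
  have hcardS : Fintype.card ↥(↑S : Set V) = S.card := by
    rw [← Set.toFinset_card, Finset.toFinset_coe]
  have f3 : x₂ + (m : ℤ) * S.card ≤ E₂ + m * p₂ := by
    have := parts_bound hm H₂
    rw [hcardS] at this
    rw [hx₂, hE₂, hp₂]
    push_cast at this ⊢
    linarith
  have f4 : E₂ ≤ e₂ := induce_edges_le G ↑S
  have m0 : (0 : ℤ) ≤ m := by positivity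
  have x₁0 : (0 : ℤ) ≤ x₁ := by rw [hx₁]; positivity
  have h1 : (m : ℤ) * ((k : ℤ) * p₁) ≤ m * (2 * x₁ + c) := by
    exact mul_le_mul_of_nonneg_left f1 m0
  have h2 : (m : ℤ) * (2 * e₂ + c) ≤ m * D := mul_le_mul_of_nonneg_left f2 m0
  have h3 : (m : ℤ) * (x₂ + m * S.card) ≤ m * (E₂ + m * p₂) := mul_le_mul_of_nonneg_left f3 m0
  have h4 : (m : ℤ) * E₂ ≤ m * e₂ := mul_le_mul_of_nonneg_left f4 m0
  have h5 : ((2 * m : ℤ) - k) * x₁ ≤ 0 := mul_nonpos_of_nonpos_of_nonneg (by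
    have : (2 * m : ℤ) ≤ k := by exact_mod_cast hk
    linarith) x₁0
  have ZGoal : (k : ℤ) * (m * p₁ - x₁) ≤
      m * D - 2 * m ^ 2 * S.card + 2 * m * (m * p₂ - x₂) := by nlinarith [h1, h2, h3, h4, h5]
  -- move to ℚ
  have hOm1 : (Omega m H₁ : ℚ) = ((m : ℚ) * p₁ - x₁) := by
    rw [Omega, hp₁, hx₁]; push_cast; ring
  have hOm2 : (Omega m H₂ : ℚ) = ((m : ℚ) * p₂ - x₂) := by
    rw [Omega, hp₂, hx₂]; push_cast; ring
  have hDQ : ((D : ℚ)) = ∑ v ∈ S, ((G.neighborSet v).ncard : ℚ) := by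
    rw [hD]
    push_cast
    rfl
  have hsum : (∑ v ∈ S, (m : ℚ) * (((G.neighborSet v).ncard : ℚ) - 2 * m) / k) =
      ((m : ℚ) * D - 2 * m ^ 2 * S.card) / k := by
    rw [← Finset.sum_div]
    congr 1
    calc ∑ v ∈ S, (m : ℚ) * (((G.neighborSet v).ncard : ℚ) - 2 * m)
        = ∑ v ∈ S, ((m : ℚ) * ((G.neighborSet v).ncard : ℚ) - 2 * m ^ 2) :=
          Finset.sum_congr rfl (fun v _ => by ring)
      _ = (m : ℚ) * ∑ v ∈ S, ((G.neighborSet v).ncard : ℚ) - S.card * (2 * m ^ 2) := by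
          rw [Finset.sum_sub_distrib, ← Finset.mul_sum, Finset.sum_const, nsmul_eq_mul]
      _ = (m : ℚ) * D - 2 * m ^ 2 * S.card := by rw [hDQ]; ring
  rw [hOm1, hOm2, hsum, div_mul_eq_mul_div, ← add_div, le_div_iff₀ (by positivity)]
  have : ((m : ℚ) * p₁ - x₁) * k = ((k : ℤ) * (m * p₁ - x₁) : ℤ) := by push_cast; ring
  rw [this]
  have h2' : ((m : ℚ) * D - 2 * m ^ 2 * S.card + 2 * m * ((m : ℚ) * p₂ - x₂)) =
      ((m * D - 2 * m ^ 2 * S.card + 2 * m * (m * p₂ - x₂) : ℤ) : ℚ) := by push_cast; ring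
  rw [h2']
  exact_mod_cast ZGoal
end

section
/- Let H be a graph and φ a nonnegative real-valued function on V(H). Then there exists an independent set I of vertices of H such that Σ_{v∈V(H)} φ(v) ≤ Σ_{v∈I} φ(v)(d_H(v) + 1). -/
open SimpleGraph

theorem stmt19 {V : Type*} [Fintype V] (H : SimpleGraph V) (phi : V → ℝ)
    (hphi : ∀ v, 0 ≤ phi v) :
    ∃ I : Finset V, (∀ u ∈ I, ∀ w ∈ I, ¬ H.Adj u w) ∧
      ∑ v, phi v ≤ ∑ v ∈ I, phi v * (((H.neighborSet v).ncard : ℝ) + 1) := by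
  classical
  suffices h : ∀ S : Finset V, ∃ I : Finset V, I ⊆ S ∧
      (∀ u ∈ I, ∀ w ∈ I, ¬ H.Adj u w) ∧
      ∑ v ∈ S, phi v ≤ ∑ v ∈ I, phi v * (((H.neighborSet v).ncard : ℝ) + 1) by
    obtain ⟨I, _, hind, hsum⟩ := h Finset.univ
    exact ⟨I, hind, hsum⟩
  intro S
  induction S using Finset.strongInduction with
  | _ S ih =>
    rcases S.eq_empty_or_nonempty with rfl | hne
    · exact ⟨∅, by simp, by simp, by simp⟩
    · obtain ⟨v, hvS, hvmax⟩ := S.exists_max_image phi hne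
      set N : Finset V := insert v (H.neighborSet v).toFinset with hN
      set S' : Finset V := S \ N with hS'def
      have hvN : v ∈ N := Finset.mem_insert_self _ _
      have hS'ss : S' ⊂ S := by
        refine Finset.ssubset_iff_of_subset (Finset.sdiff_subset) |>.mpr ⟨v, hvS, ?_⟩
        simp [hS'def, hvN]
      obtain ⟨I, hIsub, hind, hsum⟩ := ih S' hS'ss
      have hvI : v ∉ I := by
        intro hv
        have := hIsub hv
        simp [hS'def, hvN] at this
      have hncard : ((H.neighborSet v).ncard : ℝ) = ((H.neighborSet v).toFinset.card : ℝ) := by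
        rw [Set.ncard_eq_toFinset_card']
      refine ⟨insert v I, ?_, ?_, ?_⟩
      · intro u hu
        rcases Finset.mem_insert.mp hu with h | h
        · exact h ▸ hvS
        · exact (Finset.mem_sdiff.mp (hIsub h)).1
      · have hnotadj : ∀ w ∈ I, ¬ H.Adj v w := by
          intro w hw hadj
          have hwN : w ∉ N := (Finset.mem_sdiff.mp (hIsub hw)).2
          exact hwN (Finset.mem_insert_of_mem (by simpa using hadj))
        intro u hu w hw
        rcases Finset.mem_insert.mp hu with h1 | h1 <;>
          rcases Finset.mem_insert.mp hw with h2 | h2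
        · subst h1; subst h2; exact H.loopless.irrefl _
        · subst h1; exact hnotadj w h2
        · subst h2; intro hadj; exact hnotadj u h1 hadj.symm
        · exact hind u h1 w h2
      · have hsplit : ∑ x ∈ S ∩ N, phi x + ∑ x ∈ S', phi x = ∑ x ∈ S, phi x :=
          Finset.sum_inter_add_sum_sdiff S N phi
        have h1 : ∑ x ∈ S ∩ N, phi x ≤ (N.card : ℝ) * phi v := by
          calc ∑ x ∈ S ∩ N, phi x ≤ ∑ _x ∈ S ∩ N, phi v := by
                refine Finset.sum_le_sum fun x hx => hvmax x (Finset.mem_inter.mp hx).1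
            _ = ((S ∩ N).card : ℝ) * phi v := by
                rw [Finset.sum_const, nsmul_eq_mul]
            _ ≤ (N.card : ℝ) * phi v := by
                refine mul_le_mul_of_nonneg_right ?_ (hphi v)
                exact_mod_cast Finset.card_le_card (Finset.inter_subset_right)
        have h2 : (N.card : ℝ) ≤ ((H.neighborSet v).ncard : ℝ) + 1 := by
          rw [hncard]
          have := Finset.card_insert_le v (H.neighborSet v).toFinset
          exact_mod_cast this
        have h3 : ∑ x ∈ S ∩ N, phi x ≤ phi v * (((H.neighborSet v).ncard : ℝ) + 1) := by
          calc ∑ x ∈ S ∩ N, phi x ≤ (N.card : ℝ) * phi v := h1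
            _ ≤ (((H.neighborSet v).ncard : ℝ) + 1) * phi v :=
                mul_le_mul_of_nonneg_right h2 (hphi v)
            _ = phi v * (((H.neighborSet v).ncard : ℝ) + 1) := by ring
        rw [Finset.sum_insert hvI, ← hsplit]
        exact add_le_add h3 hsum
end
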